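/- Let G and H be connected multigraphs joined at exactly one vertex and let e be a regular edge of G (not a bridge, not a self-loop, and G∖e is not a tree). Then Condition 1 holds for (G,e) if and only if Condition 1 holds for (G∪H, e). -/

import Mathlib

/-- A multigraph: each edge `e` has endpoints `fst e` and `snd e`. -/
structure Multigraph (V : Type) (E : Type) where
  fst : E → V
  snd : E → V

namespace Multigraph

variable {V E V' E' W : Type}

/-- Adjacency using only edges in the set `S`. -/
def Adj (G : Multigraph V E) (S : Set E) (u v : V) : Prop :=
  ∃ e ∈ S, (G.fst e = u ∧ G.snd e = v) ∨ (G.fst e = v ∧ G.snd e = u)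

/-- All vertices are connected using edges from `S`. -/
def ConnOn (G : Multigraph V E) (S : Set E) : Prop :=
  ∀ u v : V, Relation.ReflTransGen (G.Adj S) u v

/-- The multigraph is connected. -/
def ConnectedGraph (G : Multigraph V E) : Prop := G.ConnOn Set.univ

/-- A spanning tree: a minimally spanning-connected edge set. -/
def IsSpanningTree (G : Multigraph V E) [DecidableEq E] (T : Finset E) : Prop :=
  G.ConnOn ↑T ∧ ∀ e ∈ T, ¬ G.ConnOn ↑(T.erase e)

open Classical in
/-- The Kirchhoff polynomial `Ψ_G = ∑_{T spanning tree} ∏_{e ∉ T} t_e`. -/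
noncomputable def kirchhoff (G : Multigraph V E) [Fintype E] [DecidableEq E] :
    MvPolynomial E ℚ :=
  ∑ T : Finset E, if G.IsSpanningTree T then ∏ e ∈ Tᶜ, MvPolynomial.X e else 0

/-- Deletion of the edge `e`. -/
def delete (G : Multigraph V E) (e : E) : Multigraph V {e' : E // e' ≠ e} :=
  ⟨fun e' => G.fst e'.1, fun e' => G.snd e'.1⟩

/-- Contraction of the edge `e` (its two endpoints get identified). -/
def contract (G : Multigraph V E) (e : E) :
    Multigraph (Quot fun a b : V => a = G.fst e ∧ b = G.snd e) {e' : E // e' ≠ e} :=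
  ⟨fun e' => Quot.mk _ (G.fst e'.1), fun e' => Quot.mk _ (G.snd e'.1)⟩

/-- Identify the two vertices `a` and `b`. -/
def identify (G : Multigraph V E) (a b : V) :
    Multigraph (Quot fun x y : V => x = a ∧ y = b) E :=
  ⟨fun e => Quot.mk _ (G.fst e), fun e => Quot.mk _ (G.snd e)⟩

/-- A self-loop. -/
def IsLoop (G : Multigraph V E) (e : E) : Prop := G.fst e = G.snd e

/-- A bridge: deleting `e` disconnects the graph. -/
def IsBridge (G : Multigraph V E) (e : E) : Prop := ¬ G.ConnOn {e' | e' ≠ e}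

/-- The whole graph is a tree (its full edge set is a spanning tree). -/
def IsTreeGraph (G : Multigraph V E) [Fintype E] [DecidableEq E] : Prop := G.IsSpanningTree Finset.univ

/-- A regular edge: not a bridge, not a self-loop, and deleting it does not leave a tree. -/
def IsRegular (G : Multigraph V E) [Fintype E] [DecidableEq E] (e : E) : Prop :=
  ¬ G.IsBridge e ∧ ¬ G.IsLoop e ∧ ¬ (G.delete e).IsTreeGraph

/-- The Jacobian ideal of a polynomial: the ideal generated by its partial derivatives. -/
noncomputable def jacobianIdeal {σ : Type} (f : MvPolynomial σ ℚ) :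
    Ideal (MvPolynomial σ ℚ) :=
  Ideal.span (Set.range fun i : σ => MvPolynomial.pderiv i f)

/-- Aluffi's Condition 1 for the pair `(G, e)`: `Ψ_G` lies in the Jacobian ideal of `Ψ_{G∖e}`. -/
def Cond1 (G : Multigraph V E) [Fintype E] [DecidableEq E] (e : E) : Prop :=
  G.kirchhoff ∈
    jacobianIdeal (MvPolynomial.rename (Subtype.val : {e' : E // e' ≠ e} → E)
      (G.delete e).kirchhoff)

end Multigraph
namespace Multigraph

open Relation

variable {V E V' E' W : Type}

lemma Adj.symm {G : Multigraph V E} {S : Set E} {u v : V} (h : G.Adj S u v) :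
    G.Adj S v u := by
  obtain ⟨e, he, h⟩ := h
  exact ⟨e, he, h.symm⟩

lemma rtg_symm {G : Multigraph V E} {S : Set E} {u v : V}
    (h : ReflTransGen (G.Adj S) u v) : ReflTransGen (G.Adj S) v u :=
  by haveI : Std.Symm (G.Adj S) := ⟨fun _ _ hx => hx.symm⟩; exact ReflTransGen.symmetric.symm _ _ h

lemma Adj.mono {G : Multigraph V E} {S S' : Set E} (hS : S ⊆ S') {u v : V}
    (h : G.Adj S u v) : G.Adj S' u v := by
  obtain ⟨e, he, h⟩ := h
  exact ⟨e, hS he, h⟩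

lemma rtg_mono {G : Multigraph V E} {S S' : Set E} (hS : S ⊆ S') {u v : V}
    (h : ReflTransGen (G.Adj S) u v) : ReflTransGen (G.Adj S') u v :=
  ReflTransGen.mono (r := G.Adj S) (p := G.Adj S') (fun _ _ hx => hx.mono hS) _ _ h

lemma ConnOn.mono' {G : Multigraph V E} {S S' : Set E} (hS : S ⊆ S')
    (h : G.ConnOn S) : G.ConnOn S' := fun u v => rtg_mono hS (h u v)

/-- If the endpoints of `t` are connected without `t`, then `t` can be dropped. -/
lemma connOn_diff {G : Multigraph V E} {S : Set E} {t : E}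
    (h : G.ConnOn S)
    (huv : ReflTransGen (G.Adj (S \ {t})) (G.fst t) (G.snd t)) :
    G.ConnOn (S \ {t}) := by
  have key : ∀ {x y}, G.Adj S x y → ReflTransGen (G.Adj (S \ {t})) x y := by
    rintro x y ⟨e, he, hxy⟩
    by_cases het : e = t
    · subst het
      rcases hxy with ⟨h1, h2⟩ | ⟨h1, h2⟩
      · rw [← h1, ← h2]; exact huv
      · rw [← h1, ← h2]; exact rtg_symm huv
    · exact ReflTransGen.single ⟨e, ⟨he, het⟩, hxy⟩
  intro a b
  induction h a b with
  | refl => exact .refl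
  | tail _ hbc ih => exact ih.trans (key hbc)

lemma reach_endpoint {G : Multigraph V E} {S : Set E} {t : E} {a : V}
    (h : ReflTransGen (G.Adj S) a (G.fst t)) :
    ReflTransGen (G.Adj (S \ {t})) a (G.fst t) ∨
      ReflTransGen (G.Adj (S \ {t})) a (G.snd t) := by
  induction h using ReflTransGen.head_induction_on with
  | refl => exact Or.inl .refl
  | head hxy _ ih =>
    obtain ⟨e, he, hxy⟩ := hxy
    by_cases het : e = t
    · subst het
      rcases hxy with ⟨h1, h2⟩ | ⟨h1, h2⟩
      · rw [← h1]; exact Or.inl .refl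
      · rw [← h2]; exact Or.inr .refl
    · exact ih.imp (fun hp => .head ⟨e, ⟨he, het⟩, hxy⟩ hp)
        (fun hp => .head ⟨e, ⟨he, het⟩, hxy⟩ hp)

lemma rtg_filter_class {G : Multigraph V E} {S : Set E} {P : V → Prop}
    (hS : ∀ e ∈ S, (P (G.fst e) ↔ P (G.snd e))) {x y : V}
    (h : ReflTransGen (G.Adj S) x y) (hx : P x) :
    ReflTransGen (G.Adj {e | e ∈ S ∧ P (G.fst e)}) x y ∧ P y := by
  induction h with
  | refl => exact ⟨.refl, hx⟩
  | @tail b c _ he ih =>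
    obtain ⟨ih1, ihP⟩ := ih
    obtain ⟨e, heS, hxy⟩ := he
    have hPf : P (G.fst e) ∧ P (G.snd e) := by
      rcases hxy with ⟨h1, h2⟩ | ⟨h1, h2⟩
      · have : P (G.fst e) := h1 ▸ ihP
        exact ⟨this, (hS e heS).mp this⟩
      · have : P (G.snd e) := h2 ▸ ihP
        exact ⟨(hS e heS).mpr this, this⟩
    have hPc : P c := by
      rcases hxy with ⟨h1, h2⟩ | ⟨h1, h2⟩
      · exact h2 ▸ hPf.2
      · exact h1 ▸ hPf.1
    exact ⟨ih1.tail ⟨e, ⟨heS, hPf.1⟩, hxy⟩, hPc⟩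

open Classical in
/-- Restriction of a multigraph to a vertex subset (junk endpoints elsewhere). -/
noncomputable def restrict (G : Multigraph V E) (P : V → Prop) (v0 : V) (h0 : P v0) :
    Multigraph {x // P x} E where
  fst e := if h : P (G.fst e) then ⟨G.fst e, h⟩ else ⟨v0, h0⟩
  snd e := if h : P (G.snd e) then ⟨G.snd e, h⟩ else ⟨v0, h0⟩

lemma rtg_restrict_down {G : Multigraph V E} {P : V → Prop} {v0 : V} {h0 : P v0}
    {S : Set E} (hS : ∀ e ∈ S, P (G.fst e) ∧ P (G.snd e)) {a b : {x // P x}}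
    (h : ReflTransGen ((G.restrict P v0 h0).Adj S) a b) :
    ReflTransGen (G.Adj S) a.1 b.1 := by
  induction h with
  | refl => exact .refl
  | tail _ he ih =>
    obtain ⟨e, heS, hxy⟩ := he
    refine ih.tail ⟨e, heS, ?_⟩
    have h1 := (hS e heS).1
    have h2 := (hS e heS).2
    rcases hxy with ⟨ha, hb⟩ | ⟨ha, hb⟩
    · refine Or.inl ⟨?_, ?_⟩
      · have := congrArg Subtype.val ha
        simpa [restrict, dif_pos h1] using this
      · have := congrArg Subtype.val hb
        simpa [restrict, dif_pos h2] using this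
    · refine Or.inr ⟨?_, ?_⟩
      · have := congrArg Subtype.val ha
        simpa [restrict, dif_pos h1] using this
      · have := congrArg Subtype.val hb
        simpa [restrict, dif_pos h2] using this

lemma rtg_restrict_up {G : Multigraph V E} {P : V → Prop} {v0 : V} {h0 : P v0}
    {S : Set E} (hS : ∀ e ∈ S, P (G.fst e) ∧ P (G.snd e)) :
    ∀ {x y : V}, ReflTransGen (G.Adj S) x y → ∀ (hx : P x) (hy : P y),
      ReflTransGen ((G.restrict P v0 h0).Adj S) ⟨x, hx⟩ ⟨y, hy⟩ := by
  intro x y h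
  induction h with
  | refl => intro hx hy; exact .refl
  | @tail b c _ he ih =>
    intro hx hy
    obtain ⟨e, heS, hxy⟩ := he
    have hb : P b := by
      rcases hxy with ⟨h1, h2⟩ | ⟨h1, h2⟩
      · rw [← h1]; exact (hS e heS).1
      · rw [← h2]; exact (hS e heS).2
    refine (ih hx hb).tail ⟨e, heS, ?_⟩
    rcases hxy with ⟨h1, h2⟩ | ⟨h1, h2⟩
    · exact Or.inl ⟨by simp [restrict, dif_pos (hS e heS).1, h1],
        by simp [restrict, dif_pos (hS e heS).2, h2]⟩
    · exact Or.inr ⟨by simp [restrict, dif_pos (hS e heS).1, h1],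
        by simp [restrict, dif_pos (hS e heS).2, h2]⟩

end Multigraph
namespace Multigraph

open Relation

lemma spanningTree_card (n : ℕ) : ∀ {V E : Type} [DecidableEq E] [Finite V] [Nonempty V]
    (G : Multigraph V E) (T : Finset E), T.card = n → G.IsSpanningTree T →
    T.card + 1 = Nat.card V := by
  induction n using Nat.strong_induction_on with
  | _ n ih =>
  intro V E _ _ _ G T hn hT
  classical
  rcases T.eq_empty_or_nonempty with hTe | ⟨t, ht⟩
  · subst hTe
    have hsub : ∀ a b : V, a = b := by
      intro a b
      have h := hT.1 b a
      rw [reflTransGen_iff_eq] at h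
      · exact h
      · rintro c ⟨e, he, -⟩
        simp at he
    have : Nat.card V = 1 := Nat.card_eq_one_iff_unique.mpr ⟨⟨hsub⟩, ‹Nonempty V›⟩
    simp [this]
  · set u := G.fst t with hu_def
    set v := G.snd t with hv_def
    set S : Set E := ↑(T.erase t) with hS_def
    have hScoe : S = ↑T \ {t} := by simp [hS_def, Finset.coe_erase]
    have hr_uv : ¬ ReflTransGen (G.Adj S) u v := by
      intro huv
      refine hT.2 t ht ?_
      have := connOn_diff hT.1 (by rwa [← hScoe])
      rwa [← hScoe] at this
    have h2 : ∀ a : V, ReflTransGen (G.Adj S) a u ∨ ReflTransGen (G.Adj S) a v := by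
      intro a
      have h := reach_endpoint (S := ↑T) (t := t) (hT.1 a u)
      rwa [← hScoe] at h
    set P : V → Prop := fun a => ReflTransGen (G.Adj S) a u with hP_def
    set Q : V → Prop := fun a => ReflTransGen (G.Adj S) a v with hQ_def
    have hu : P u := .refl
    have hv : Q v := .refl
    have hPQ : ∀ a, Q a ↔ ¬ P a := by
      intro a
      constructor
      · intro hq hp
        exact hr_uv ((rtg_symm hp).trans hq)
      · intro hnp
        rcases h2 a with h | h
        · exact absurd h hnp
        · exact h
    have hadj : ∀ e ∈ S, ReflTransGen (G.Adj S) (G.fst e) (G.snd e) := by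
      intro e he
      exact .single ⟨e, he, Or.inl ⟨rfl, rfl⟩⟩
    have hclassP : ∀ e ∈ S, (P (G.fst e) ↔ P (G.snd e)) := by
      intro e he
      exact ⟨fun h => (rtg_symm (hadj e he)).trans h, fun h => (hadj e he).trans h⟩
    have hclassQ : ∀ e ∈ S, (Q (G.fst e) ↔ Q (G.snd e)) := by
      intro e he
      exact ⟨fun h => (rtg_symm (hadj e he)).trans h, fun h => (hadj e he).trans h⟩
    set T₁ : Finset E := (T.erase t).filter (fun e => P (G.fst e)) with hT₁_def
    set T₂ : Finset E := (T.erase t).filter (fun e => Q (G.fst e)) with hT₂_def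
    have hT₁coe : (↑T₁ : Set E) = {e | e ∈ S ∧ P (G.fst e)} := by
      rw [hT₁_def, Finset.coe_filter]; rfl
    have hT₂coe : (↑T₂ : Set E) = {e | e ∈ S ∧ Q (G.fst e)} := by
      rw [hT₂_def, Finset.coe_filter]; rfl
    have hendP : ∀ e ∈ (↑T₁ : Set E), P (G.fst e) ∧ P (G.snd e) := by
      intro e he
      rw [hT₁coe] at he
      exact ⟨he.2, (hclassP e he.1).mp he.2⟩
    have hendQ : ∀ e ∈ (↑T₂ : Set E), Q (G.fst e) ∧ Q (G.snd e) := by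
      intro e he
      rw [hT₂coe] at he
      exact ⟨he.2, (hclassQ e he.1).mp he.2⟩
    set M₁ := G.restrict P u hu with hM₁_def
    set M₂ := G.restrict Q v hv with hM₂_def
    have hT₁sub : T₁ ⊆ T.erase t := Finset.filter_subset _ _
    have hT₂sub : T₂ ⊆ T.erase t := Finset.filter_subset _ _
    have hST₁ : M₁.IsSpanningTree T₁ := by
      constructor
      · intro a b
        have hab : ReflTransGen (G.Adj S) a.1 b.1 := a.2.trans (rtg_symm b.2)
        have h := (rtg_filter_class hclassP hab a.2).1
        rw [← hT₁coe] at h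
        exact rtg_restrict_up hendP h a.2 b.2
      · intro f hf hconn
        have hft : f ∈ T.erase t := hT₁sub hf
        have hfT : f ∈ T := Finset.mem_of_mem_erase hft
        refine hT.2 f hfT ?_
        have hsub1 : T₁.erase f ⊆ T.erase f := by
          intro e he
          obtain ⟨hef, heT₁⟩ := Finset.mem_erase.mp he
          exact Finset.mem_erase.mpr ⟨hef, Finset.mem_of_mem_erase (hT₁sub heT₁)⟩
        have hsub2 : T₂ ⊆ T.erase f := by
          intro e he
          refine Finset.mem_erase.mpr ⟨?_, Finset.mem_of_mem_erase (hT₂sub he)⟩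
          intro hef
          subst hef
          exact (hPQ _).mp (Finset.mem_filter.mp he).2 (Finset.mem_filter.mp hf).2
        have hreach : ∀ a : V, ReflTransGen (G.Adj ↑(T.erase f)) a u ∨
            ReflTransGen (G.Adj ↑(T.erase f)) a v := by
          intro a
          rcases h2 a with hp | hq
          · left
            have hpath := hconn ⟨a, hp⟩ ⟨u, hu⟩
            have hend' : ∀ e ∈ (↑(T₁.erase f) : Set E), P (G.fst e) ∧ P (G.snd e) :=
              fun e he => hendP e (Finset.coe_subset.mpr (Finset.erase_subset _ _) he)
            have h := rtg_restrict_down hend' hpath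
            exact rtg_mono (Finset.coe_subset.mpr hsub1) h
          · right
            have h := (rtg_filter_class hclassQ hq hq).1
            rw [← hT₂coe] at h
            exact rtg_mono (Finset.coe_subset.mpr hsub2) h
        intro a b
        have htf : t ∈ T.erase f :=
          Finset.mem_erase.mpr ⟨fun h => (Finset.mem_erase.mp hft).1 h.symm, ht⟩
        have huv' : ReflTransGen (G.Adj ↑(T.erase f)) u v :=
          .single ⟨t, Finset.mem_coe.mpr htf, Or.inl ⟨rfl, rfl⟩⟩
        rcases hreach a with ha | ha <;> rcases hreach b with hb | hb
        · exact ha.trans (rtg_symm hb)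
        · exact ha.trans (huv'.trans (rtg_symm hb))
        · exact ha.trans ((rtg_symm huv').trans (rtg_symm hb))
        · exact ha.trans (rtg_symm hb)
    have hST₂ : M₂.IsSpanningTree T₂ := by
      constructor
      · intro a b
        have hab : ReflTransGen (G.Adj S) a.1 b.1 := a.2.trans (rtg_symm b.2)
        have h := (rtg_filter_class hclassQ hab a.2).1
        rw [← hT₂coe] at h
        exact rtg_restrict_up hendQ h a.2 b.2
      · intro f hf hconn
        have hft : f ∈ T.erase t := hT₂sub hf
        have hfT : f ∈ T := Finset.mem_of_mem_erase hft
        refine hT.2 f hfT ?_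
        have hsub1 : T₂.erase f ⊆ T.erase f := by
          intro e he
          obtain ⟨hef, heT₂⟩ := Finset.mem_erase.mp he
          exact Finset.mem_erase.mpr ⟨hef, Finset.mem_of_mem_erase (hT₂sub heT₂)⟩
        have hsub2 : T₁ ⊆ T.erase f := by
          intro e he
          refine Finset.mem_erase.mpr ⟨?_, Finset.mem_of_mem_erase (hT₁sub he)⟩
          intro hef
          subst hef
          exact (hPQ _).mp (Finset.mem_filter.mp hf).2 (Finset.mem_filter.mp he).2
        have hreach : ∀ a : V, ReflTransGen (G.Adj ↑(T.erase f)) a u ∨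
            ReflTransGen (G.Adj ↑(T.erase f)) a v := by
          intro a
          rcases h2 a with hp | hq
          · left
            have h := (rtg_filter_class hclassP hp hp).1
            rw [← hT₁coe] at h
            exact rtg_mono (Finset.coe_subset.mpr hsub2) h
          · right
            have hpath := hconn ⟨a, hq⟩ ⟨v, hv⟩
            have hend' : ∀ e ∈ (↑(T₂.erase f) : Set E), Q (G.fst e) ∧ Q (G.snd e) :=
              fun e he => hendQ e (Finset.coe_subset.mpr (Finset.erase_subset _ _) he)
            have h := rtg_restrict_down hend' hpath
            exact rtg_mono (Finset.coe_subset.mpr hsub1) h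
        intro a b
        have htf : t ∈ T.erase f :=
          Finset.mem_erase.mpr ⟨fun h => (Finset.mem_erase.mp hft).1 h.symm, ht⟩
        have huv' : ReflTransGen (G.Adj ↑(T.erase f)) u v :=
          .single ⟨t, Finset.mem_coe.mpr htf, Or.inl ⟨rfl, rfl⟩⟩
        rcases hreach a with ha | ha <;> rcases hreach b with hb | hb
        · exact ha.trans (rtg_symm hb)
        · exact ha.trans (huv'.trans (rtg_symm hb))
        · exact ha.trans ((rtg_symm huv').trans (rtg_symm hb))
        · exact ha.trans (rtg_symm hb)
    -- cardinal arithmetic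
    haveI : Fintype V := Fintype.ofFinite V
    have hcard2 : T₁.card + T₂.card = (T.erase t).card := by
      have hT₂' : T₂ = (T.erase t).filter (fun e => ¬ P (G.fst e)) := by
        apply Finset.filter_congr
        intro e _
        exact hPQ _
      rw [hT₂']
      exact Finset.card_filter_add_card_filter_not _
    have herase : (T.erase t).card + 1 = T.card := Finset.card_erase_add_one ht
    have hn0 : 0 < T.card := Finset.card_pos.mpr ⟨t, ht⟩
    have hlt₁ : T₁.card < n := by
      have := Finset.card_le_card hT₁sub
      omega
    have hlt₂ : T₂.card < n := by
      have := Finset.card_le_card hT₂sub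
      omega
    haveI : Nonempty {x // P x} := ⟨⟨u, hu⟩⟩
    haveI : Nonempty {x // Q x} := ⟨⟨v, hv⟩⟩
    have hc₁ := ih T₁.card hlt₁ M₁ T₁ rfl hST₁
    have hc₂ := ih T₂.card hlt₂ M₂ T₂ rfl hST₂
    have hsplit : Nat.card {x // P x} + Nat.card {x // Q x} = Nat.card V := by
      rw [Nat.card_eq_fintype_card, Nat.card_eq_fintype_card, Nat.card_eq_fintype_card]
      have hQc : Fintype.card {x // Q x} = Fintype.card {x // ¬ P x} :=
        Fintype.card_congr (Equiv.subtypeEquivRight hPQ)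
      rw [hQc, Fintype.card_subtype_compl]
      have := Fintype.card_subtype_le P
      omega
    omega

end Multigraph
namespace Multigraph

open Relation MvPolynomial

lemma spanningTree_card_eq {V E : Type} [DecidableEq E] [Finite E]
    (G : Multigraph V E) {T₁ T₂ : Finset E}
    (h₁ : G.IsSpanningTree T₁) (h₂ : G.IsSpanningTree T₂) : T₁.card = T₂.card := by
  classical
  by_cases hsub : ∀ a b : V, a = b
  · have hconn : ∀ (T : Finset E) (f : E), G.ConnOn ↑(T.erase f) := by
      intro T f a b
      rw [hsub a b]
    have e1 : T₁ = ∅ := by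
      by_contra hne
      obtain ⟨f, hf⟩ := Finset.nonempty_iff_ne_empty.mpr hne
      exact h₁.2 f hf (hconn _ _)
    have e2 : T₂ = ∅ := by
      by_contra hne
      obtain ⟨f, hf⟩ := Finset.nonempty_iff_ne_empty.mpr hne
      exact h₂.2 f hf (hconn _ _)
    rw [e1, e2]
  · push_neg at hsub
    obtain ⟨a, b, hab⟩ := hsub
    haveI : Nonempty V := ⟨a⟩
    haveI hfin : Finite V := by
      have hx : ∀ x : V, ∃ p : E × Bool, (if p.2 then G.fst p.1 else G.snd p.1) = x := by
        intro x
        have hpath : ∀ y : V, x ≠ y → ∃ p : E × Bool,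
            (if p.2 then G.fst p.1 else G.snd p.1) = x := by
          intro y hxy
          rcases (h₁.1 x y).cases_head with heq | ⟨c, hadj, -⟩
          · exact absurd heq hxy
          · obtain ⟨e, -, h⟩ := hadj
            rcases h with ⟨h1, -⟩ | ⟨-, h2⟩
            · exact ⟨(e, true), h1⟩
            · exact ⟨(e, false), h2⟩
        by_cases hxa : x = a
        · exact hpath b (hxa ▸ hab)
        · exact hpath a hxa
      choose p hp using hx
      exact Finite.of_injective p (fun x y hxy => by rw [← hp x, ← hp y, hxy])
    have c1 := spanningTree_card T₁.card G T₁ rfl h₁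
    have c2 := spanningTree_card T₂.card G T₂ rfl h₂
    omega

lemma exists_spanningTree {V E : Type} [DecidableEq E] [Fintype E]
    (G : Multigraph V E) (h : G.ConnectedGraph) : ∃ T, G.IsSpanningTree T := by
  classical
  obtain ⟨T, hTmem, hTmin⟩ := Finset.exists_min_image
      (Finset.univ.filter fun T : Finset E => G.ConnOn ↑T) Finset.card
      ⟨Finset.univ, Finset.mem_filter.mpr ⟨Finset.mem_univ _, by
        simpa [Finset.coe_univ] using (show G.ConnOn Set.univ from h)⟩⟩
  refine ⟨T, (Finset.mem_filter.mp hTmem).2, ?_⟩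
  intro f hf hconn
  have hmem : T.erase f ∈ Finset.univ.filter fun T : Finset E => G.ConnOn ↑T :=
    Finset.mem_filter.mpr ⟨Finset.mem_univ _, hconn⟩
  have h1 := hTmin _ hmem
  have h2 := Finset.card_erase_lt_of_mem hf
  omega

lemma pderiv_prod_X_not_mem {E : Type} [DecidableEq E] {s : Finset E} {i : E} (h : i ∉ s) :
    pderiv i (∏ e ∈ s, (X e : MvPolynomial E ℚ)) = 0 := by
  induction s using Finset.induction_on with
  | empty => simp
  | @insert a s' hni ih =>
    rw [Finset.prod_insert hni, pderiv_mul,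
      pderiv_X_of_ne (fun hai : a = i => h (hai ▸ Finset.mem_insert_self a s')),
      ih (fun hi => h (Finset.mem_insert_of_mem hi))]
    ring

lemma X_mul_pderiv_prod {E : Type} [DecidableEq E] (s : Finset E) (i : E) :
    X i * pderiv i (∏ e ∈ s, (X e : MvPolynomial E ℚ)) =
      if i ∈ s then ∏ e ∈ s, X e else 0 := by
  by_cases hi : i ∈ s
  · rw [if_pos hi, ← Finset.prod_erase_mul s _ hi, pderiv_mul,
      pderiv_prod_X_not_mem (Finset.notMem_erase i s), pderiv_X_self]
    ring
  · rw [if_neg hi, pderiv_prod_X_not_mem hi, mul_zero]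

lemma kirchhoff_mem_jacobian {V E : Type} [Fintype E] [DecidableEq E]
    (M : Multigraph V E) (hM : ¬ M.IsTreeGraph) :
    M.kirchhoff ∈ Ideal.span (Set.range fun i : E => pderiv i M.kirchhoff) := by
  classical
  obtain ⟨d, hd1, hd⟩ : ∃ d : ℕ, 1 ≤ d ∧ ∀ T : Finset E, M.IsSpanningTree T → Tᶜ.card = d := by
    by_cases hex : ∃ T, M.IsSpanningTree T
    · obtain ⟨T₀, hT₀⟩ := hex
      refine ⟨T₀ᶜ.card, ?_, ?_⟩
      · rw [Nat.one_le_iff_ne_zero]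
        intro h0
        rw [Finset.card_eq_zero, Finset.compl_eq_empty_iff] at h0
        refine hM ?_
        show M.IsSpanningTree Finset.univ
        rw [← h0]
        exact hT₀
      · intro T hT
        have hcc := spanningTree_card_eq M hT hT₀
        rw [Finset.card_compl, Finset.card_compl, hcc]
    · exact ⟨1, le_refl 1, fun T hT => ((hex ⟨T, hT⟩).elim)⟩
  have key : ∀ T : Finset E, ∑ i : E, X i * pderiv i
      (if M.IsSpanningTree T then ∏ e ∈ Tᶜ, (X e : MvPolynomial E ℚ) else 0) =
      (d : ℚ) • (if M.IsSpanningTree T then ∏ e ∈ Tᶜ, (X e : MvPolynomial E ℚ) else 0) := by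
    intro T
    by_cases hT : M.IsSpanningTree T
    · rw [if_pos hT]
      have step : ∀ i : E, X i * pderiv i (∏ e ∈ Tᶜ, (X e : MvPolynomial E ℚ)) =
          if i ∈ Tᶜ then ∏ e ∈ Tᶜ, X e else 0 := fun i => X_mul_pderiv_prod Tᶜ i
      rw [Finset.sum_congr rfl (fun i _ => step i), Finset.sum_ite_mem,
        Finset.univ_inter, Finset.sum_const, hd T hT, Nat.cast_smul_eq_nsmul]
    · simp [hT]
  have heuler : ∑ i : E, X i * pderiv i M.kirchhoff = (d : ℚ) • M.kirchhoff := by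
    unfold kirchhoff
    rw [Finset.smul_sum]
    have : ∀ i : E, X i * pderiv i (∑ T : Finset E,
        if M.IsSpanningTree T then ∏ e ∈ Tᶜ, (X e : MvPolynomial E ℚ) else 0) =
        ∑ T : Finset E, X i * pderiv i
          (if M.IsSpanningTree T then ∏ e ∈ Tᶜ, (X e : MvPolynomial E ℚ) else 0) := by
      intro i
      rw [map_sum, Finset.mul_sum]
    rw [Finset.sum_congr rfl (fun i _ => this i), Finset.sum_comm]
    exact Finset.sum_congr rfl (fun T _ => key T)
  have hdQ : (d : ℚ) ≠ 0 := by
    simp only [ne_eq, Nat.cast_eq_zero]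
    omega
  have hrepr : M.kirchhoff = C ((d : ℚ)⁻¹) * ∑ i : E, X i * pderiv i M.kirchhoff := by
    rw [heuler, smul_eq_C_mul, ← mul_assoc, ← C_mul, inv_mul_cancel₀ hdQ, C_1, one_mul]
  have hmem : C ((d : ℚ)⁻¹) * ∑ i : E, X i * pderiv i M.kirchhoff ∈
      Ideal.span (Set.range fun i : E => pderiv i M.kirchhoff) :=
    Ideal.mul_mem_left _ _ (Ideal.sum_mem _ fun i _ =>
      Ideal.mul_mem_left _ _ (Ideal.subset_span ⟨i, rfl⟩))
  convert hmem using 2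

end Multigraph
namespace Multigraph

open Relation MvPolynomial

variable {V E V' E' W : Type}

lemma join_conn_proj {G : Multigraph V E} {H : Multigraph V' E'} {K : Multigraph W (E ⊕ E')}
    {φ : V → W} {φ' : V' → W} {w0 : W}
    (hφ : Function.Injective φ)
    (hc : ∀ e : E, K.fst (Sum.inl e) = φ (G.fst e) ∧ K.snd (Sum.inl e) = φ (G.snd e))
    (hc' : ∀ e' : E', K.fst (Sum.inr e') = φ' (H.fst e') ∧
      K.snd (Sum.inr e') = φ' (H.snd e'))
    (hmeet : Set.range φ ∩ Set.range φ' = {w0}) {u0 : V} (hu0 : φ u0 = w0)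
    (S : Set (E ⊕ E')) {x y : V}
    (h : Relation.ReflTransGen (K.Adj S) (φ x) (φ y)) :
    Relation.ReflTransGen (G.Adj (Sum.inl ⁻¹' S)) x y := by
  classical
  set ρ : W → V := fun w => if h : ∃ z, φ z = w then h.choose else u0 with hρ
  have hρφ : ∀ z, ρ (φ z) = z := by
    intro z
    have hex : ∃ z', φ z' = φ z := ⟨z, rfl⟩
    simp only [hρ, dif_pos hex]
    exact hφ hex.choose_spec
  have step : ∀ {a b : W}, K.Adj S a b →
      Relation.ReflTransGen (G.Adj (Sum.inl ⁻¹' S)) (ρ a) (ρ b) := by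
    rintro a b ⟨s, hs, hab⟩
    cases s with
    | inl i =>
      have h1 := (hc i).1
      have h2 := (hc i).2
      rcases hab with ⟨ha, hb⟩ | ⟨ha, hb⟩
      · rw [← ha, ← hb, h1, h2, hρφ, hρφ]
        exact .single ⟨i, hs, Or.inl ⟨rfl, rfl⟩⟩
      · rw [← ha, ← hb, h1, h2, hρφ, hρφ]
        exact .single ⟨i, hs, Or.inr ⟨rfl, rfl⟩⟩
    | inr j =>
      have hmem : ∀ c : W, c ∈ Set.range φ' → ρ c = u0 := by
        intro c hcr
        by_cases hcφ : ∃ z, φ z = c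
        · have hint : c ∈ Set.range φ ∩ Set.range φ' := ⟨hcφ, hcr⟩
          rw [hmeet, Set.mem_singleton_iff] at hint
          rw [hint, ← hu0, hρφ]
        · simp [hρ, dif_neg hcφ]
      have h1 := (hc' j).1
      have h2 := (hc' j).2
      have hrange : a ∈ Set.range φ' ∧ b ∈ Set.range φ' := by
        rcases hab with ⟨ha, hb⟩ | ⟨ha, hb⟩
        · exact ⟨⟨_, h1.symm.trans ha⟩, ⟨_, h2.symm.trans hb⟩⟩
        · exact ⟨⟨_, h2.symm.trans hb⟩, ⟨_, h1.symm.trans ha⟩⟩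
      rw [hmem a hrange.1, hmem b hrange.2]
  have main : ∀ {a b : W}, Relation.ReflTransGen (K.Adj S) a b →
      Relation.ReflTransGen (G.Adj (Sum.inl ⁻¹' S)) (ρ a) (ρ b) := by
    intro a b hab
    induction hab with
    | refl => exact .refl
    | tail _ hbc ih => exact ih.trans (step hbc)
  have hfin := main h
  rwa [hρφ, hρφ] at hfin

lemma join_conn_proj' {G : Multigraph V E} {H : Multigraph V' E'} {K : Multigraph W (E ⊕ E')}
    {φ : V → W} {φ' : V' → W} {w0 : W}
    (hφ' : Function.Injective φ')
    (hc : ∀ e : E, K.fst (Sum.inl e) = φ (G.fst e) ∧ K.snd (Sum.inl e) = φ (G.snd e))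
    (hc' : ∀ e' : E', K.fst (Sum.inr e') = φ' (H.fst e') ∧
      K.snd (Sum.inr e') = φ' (H.snd e'))
    (hmeet : Set.range φ ∩ Set.range φ' = {w0}) {u0 : V'} (hu0 : φ' u0 = w0)
    (S : Set (E ⊕ E')) {x y : V'}
    (h : Relation.ReflTransGen (K.Adj S) (φ' x) (φ' y)) :
    Relation.ReflTransGen (H.Adj (Sum.inr ⁻¹' S)) x y := by
  classical
  set ρ : W → V' := fun w => if h : ∃ z, φ' z = w then h.choose else u0 with hρ
  have hρφ : ∀ z, ρ (φ' z) = z := by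
    intro z
    have hex : ∃ z', φ' z' = φ' z := ⟨z, rfl⟩
    simp only [hρ, dif_pos hex]
    exact hφ' hex.choose_spec
  have step : ∀ {a b : W}, K.Adj S a b →
      Relation.ReflTransGen (H.Adj (Sum.inr ⁻¹' S)) (ρ a) (ρ b) := by
    rintro a b ⟨s, hs, hab⟩
    cases s with
    | inr j =>
      have h1 := (hc' j).1
      have h2 := (hc' j).2
      rcases hab with ⟨ha, hb⟩ | ⟨ha, hb⟩
      · rw [← ha, ← hb, h1, h2, hρφ, hρφ]
        exact .single ⟨j, hs, Or.inl ⟨rfl, rfl⟩⟩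
      · rw [← ha, ← hb, h1, h2, hρφ, hρφ]
        exact .single ⟨j, hs, Or.inr ⟨rfl, rfl⟩⟩
    | inl i =>
      have hmem : ∀ c : W, c ∈ Set.range φ → ρ c = u0 := by
        intro c hcr
        by_cases hcφ : ∃ z, φ' z = c
        · have hint : c ∈ Set.range φ ∩ Set.range φ' := ⟨hcr, hcφ⟩
          rw [hmeet, Set.mem_singleton_iff] at hint
          rw [hint, ← hu0, hρφ]
        · simp [hρ, dif_neg hcφ]
      have h1 := (hc i).1
      have h2 := (hc i).2
      have hrange : a ∈ Set.range φ ∧ b ∈ Set.range φ := by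
        rcases hab with ⟨ha, hb⟩ | ⟨ha, hb⟩
        · exact ⟨⟨_, h1.symm.trans ha⟩, ⟨_, h2.symm.trans hb⟩⟩
        · exact ⟨⟨_, h2.symm.trans hb⟩, ⟨_, h1.symm.trans ha⟩⟩
      rw [hmem a hrange.1, hmem b hrange.2]
  have main : ∀ {a b : W}, Relation.ReflTransGen (K.Adj S) a b →
      Relation.ReflTransGen (H.Adj (Sum.inr ⁻¹' S)) (ρ a) (ρ b) := by
    intro a b hab
    induction hab with
    | refl => exact .refl
    | tail _ hbc ih => exact ih.trans (step hbc)
  have hfin := main h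
  rwa [hρφ, hρφ] at hfin

lemma join_connOn_iff {G : Multigraph V E} {H : Multigraph V' E'}
    {K : Multigraph W (E ⊕ E')} {φ : V → W} {φ' : V' → W} {w0 : W}
    (hφ : Function.Injective φ) (hφ' : Function.Injective φ')
    (hc : ∀ e : E, K.fst (Sum.inl e) = φ (G.fst e) ∧ K.snd (Sum.inl e) = φ (G.snd e))
    (hc' : ∀ e' : E', K.fst (Sum.inr e') = φ' (H.fst e') ∧
      K.snd (Sum.inr e') = φ' (H.snd e'))
    (hcover : Set.range φ ∪ Set.range φ' = Set.univ)
    (hmeet : Set.range φ ∩ Set.range φ' = {w0})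
    (S : Set (E ⊕ E')) :
    K.ConnOn S ↔ G.ConnOn (Sum.inl ⁻¹' S) ∧ H.ConnOn (Sum.inr ⁻¹' S) := by
  have hw0 : w0 ∈ Set.range φ ∩ Set.range φ' := by
    rw [hmeet]
    exact rfl
  obtain ⟨u0, hu0⟩ := hw0.1
  obtain ⟨u0', hu0'⟩ := hw0.2
  constructor
  · intro hK
    constructor
    · intro x y
      exact join_conn_proj (H := H) hφ hc hc' hmeet hu0 S (hK (φ x) (φ y))
    · intro x y
      exact join_conn_proj' (G := G) (H := H) hφ' hc hc' hmeet hu0' S (hK (φ' x) (φ' y))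
  · rintro ⟨hGc, hHc⟩
    have lift1 : ∀ x y : V, Relation.ReflTransGen (K.Adj S) (φ x) (φ y) := by
      intro x y
      refine Relation.ReflTransGen.lift (p := K.Adj S) φ ?_ _ _ (hGc x y)
      rintro a b ⟨i, hi, hab⟩
      rcases hab with ⟨h1, h2⟩ | ⟨h1, h2⟩
      · exact ⟨Sum.inl i, hi, Or.inl ⟨by rw [(hc i).1, h1], by rw [(hc i).2, h2]⟩⟩
      · exact ⟨Sum.inl i, hi, Or.inr ⟨by rw [(hc i).1, h1], by rw [(hc i).2, h2]⟩⟩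
    have lift2 : ∀ x y : V', Relation.ReflTransGen (K.Adj S) (φ' x) (φ' y) := by
      intro x y
      refine Relation.ReflTransGen.lift (p := K.Adj S) φ' ?_ _ _ (hHc x y)
      rintro a b ⟨j, hj, hab⟩
      rcases hab with ⟨h1, h2⟩ | ⟨h1, h2⟩
      · exact ⟨Sum.inr j, hj, Or.inl ⟨by rw [(hc' j).1, h1], by rw [(hc' j).2, h2]⟩⟩
      · exact ⟨Sum.inr j, hj, Or.inr ⟨by rw [(hc' j).1, h1], by rw [(hc' j).2, h2]⟩⟩
    have hbridge : Relation.ReflTransGen (K.Adj S) (φ u0) (φ' u0') := by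
      rw [hu0, hu0']
    have hrep : ∀ c : W, (∃ x, φ x = c) ∨ (∃ y, φ' y = c) := by
      intro c
      have : c ∈ Set.range φ ∪ Set.range φ' := by
        rw [hcover]
        trivial
      exact this
    intro a b
    rcases hrep a with ⟨x, hx⟩ | ⟨x, hx⟩ <;> rcases hrep b with ⟨y, hy⟩ | ⟨y, hy⟩ <;>
      rw [← hx, ← hy]
    · exact lift1 x y
    · exact (lift1 x u0).trans (hbridge.trans (lift2 u0' y))
    · exact (lift2 x u0').trans ((rtg_symm hbridge).trans (lift1 u0 y))
    · exact lift2 x y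

end Multigraph
namespace Multigraph

open Relation MvPolynomial

variable {V E V' E' W : Type}

lemma compl_disjSum [Fintype E] [DecidableEq E] [Fintype E'] [DecidableEq E']
    (A : Finset E) (B : Finset E') :
    (A.disjSum B)ᶜ = Aᶜ.disjSum Bᶜ := by
  ext s
  cases s <;> simp

section Join

variable {G : Multigraph V E} {H : Multigraph V' E'}
    {K : Multigraph W (E ⊕ E')} {φ : V → W} {φ' : V' → W} {w0 : W}
    (hφ : Function.Injective φ) (hφ' : Function.Injective φ')
    (hc : ∀ e : E, K.fst (Sum.inl e) = φ (G.fst e) ∧ K.snd (Sum.inl e) = φ (G.snd e))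
    (hc' : ∀ e' : E', K.fst (Sum.inr e') = φ' (H.fst e') ∧
      K.snd (Sum.inr e') = φ' (H.snd e'))
    (hcover : Set.range φ ∪ Set.range φ' = Set.univ)
    (hmeet : Set.range φ ∩ Set.range φ' = {w0})

include hφ hφ' hc hc' hcover hmeet

lemma join_spanningTree_iff [DecidableEq E] [DecidableEq E']
    (A : Finset E) (B : Finset E') :
    K.IsSpanningTree (A.disjSum B) ↔ G.IsSpanningTree A ∧ H.IsSpanningTree B := by
  have hiff := join_connOn_iff hφ hφ' hc hc' hcover hmeet
  have hpre : ∀ (A : Finset E) (B : Finset E'),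
      (Sum.inl ⁻¹' (↑(A.disjSum B) : Set (E ⊕ E')) = ↑A) ∧
      (Sum.inr ⁻¹' (↑(A.disjSum B) : Set (E ⊕ E')) = ↑B) := by
    intro A B
    constructor <;> ext x <;> simp
  have hconn : ∀ (A : Finset E) (B : Finset E'),
      K.ConnOn ↑(A.disjSum B) ↔ G.ConnOn ↑A ∧ H.ConnOn ↑B := by
    intro A B
    rw [hiff, (hpre A B).1, (hpre A B).2]
  have heraseL : ∀ (a : E), (A.disjSum B).erase (Sum.inl a) = (A.erase a).disjSum B := by
    intro a
    ext s
    cases s <;> simp [Finset.mem_erase]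
  have heraseR : ∀ (b : E'), (A.disjSum B).erase (Sum.inr b) = A.disjSum (B.erase b) := by
    intro b
    ext s
    cases s <;> simp [Finset.mem_erase]
  constructor
  · intro hK
    have hc0 := (hconn A B).mp hK.1
    refine ⟨⟨hc0.1, ?_⟩, ⟨hc0.2, ?_⟩⟩
    · intro a ha hGc
      refine hK.2 (Sum.inl a) (by simp [ha]) ?_
      rw [heraseL a, hconn]
      exact ⟨hGc, hc0.2⟩
    · intro b hb hHc
      refine hK.2 (Sum.inr b) (by simp [hb]) ?_
      rw [heraseR b, hconn]
      exact ⟨hc0.1, hHc⟩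
  · rintro ⟨hG1, hH1⟩
    refine ⟨(hconn A B).mpr ⟨hG1.1, hH1.1⟩, ?_⟩
    intro s hs hKc
    cases s with
    | inl a =>
      rw [heraseL a, hconn] at hKc
      exact hG1.2 a (by simpa using hs) hKc.1
    | inr b =>
      rw [heraseR b, hconn] at hKc
      exact hH1.2 b (by simpa using hs) hKc.2

lemma join_kirchhoff [Fintype E] [DecidableEq E] [Fintype E'] [DecidableEq E'] :
    K.kirchhoff = rename Sum.inl G.kirchhoff * rename Sum.inr H.kirchhoff := by
  classical
  have hST := join_spanningTree_iff hφ hφ' hc hc' hcover hmeet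
  unfold kirchhoff
  rw [map_sum, map_sum, Finset.sum_mul_sum]
  let eqv : Finset E × Finset E' ≃ Finset (E ⊕ E') :=
    ⟨fun p => p.1.disjSum p.2, fun T => (T.toLeft, T.toRight),
      fun p => by simp, fun T => Finset.toLeft_disjSum_toRight⟩
  rw [← Fintype.sum_prod_type']
  refine (Fintype.sum_equiv eqv _ _ ?_).symm
  rintro ⟨A, B⟩
  show _ = (if K.IsSpanningTree (A.disjSum B) then
      ∏ s ∈ (A.disjSum B)ᶜ, (X s : MvPolynomial (E ⊕ E') ℚ) else 0)
  rw [hST A B, compl_disjSum, Finset.prod_disjSum]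
  by_cases hA : G.IsSpanningTree A <;> by_cases hB : H.IsSpanningTree B <;>
    simp [hA, hB, map_prod]

end Join

/-- Kirchhoff polynomial is compatible with relabelling the edges by an equivalence. -/
lemma kirchhoff_equiv {V E F : Type} [Fintype E] [DecidableEq E] [Fintype F] [DecidableEq F]
    (M : Multigraph V E) (σ : F ≃ E) :
    M.kirchhoff = rename σ (Multigraph.mk (M.fst ∘ σ) (M.snd ∘ σ)).kirchhoff := by
  classical
  set M' : Multigraph V F := Multigraph.mk (M.fst ∘ σ) (M.snd ∘ σ) with hM'
  have hAdj : ∀ (S : Set F) (x y : V), M'.Adj S x y ↔ M.Adj (σ '' S) x y := by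
    intro S x y
    constructor
    · rintro ⟨f, hf, h⟩
      exact ⟨σ f, Set.mem_image_of_mem _ hf, h⟩
    · rintro ⟨e, ⟨f, hf, rfl⟩, h⟩
      exact ⟨f, hf, h⟩
  have hConn : ∀ S : Set F, M'.ConnOn S ↔ M.ConnOn (σ '' S) := by
    intro S
    constructor <;> intro h x y
    · exact Relation.ReflTransGen.mono (fun a b hab => (hAdj S a b).mp hab) _ _ (h x y)
    · exact Relation.ReflTransGen.mono (fun a b hab => (hAdj S a b).mpr hab) _ _ (h x y)
  have hConn' : ∀ T : Finset F, M'.ConnOn ↑T ↔ M.ConnOn ↑(T.map σ.toEmbedding) := by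
    intro T
    rw [hConn, Finset.coe_map]
    rfl
  have hST : ∀ T : Finset F,
      M'.IsSpanningTree T ↔ M.IsSpanningTree (T.map σ.toEmbedding) := by
    intro T
    constructor
    · intro hT
      refine ⟨(hConn' T).mp hT.1, ?_⟩
      intro e he hc
      obtain ⟨f, hf, rfl⟩ := Finset.mem_map.mp he
      refine hT.2 f hf ?_
      rw [hConn', Finset.map_erase]
      exact hc
    · intro hT
      refine ⟨(hConn' T).mpr hT.1, ?_⟩
      intro f hf hc
      refine hT.2 (σ.toEmbedding f) (Finset.mem_map_of_mem _ hf) ?_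
      rw [← Finset.map_erase, ← hConn']
      exact hc
  have hcompl : ∀ T : Finset F, (T.map σ.toEmbedding)ᶜ = Tᶜ.map σ.toEmbedding := by
    intro T
    ext x
    obtain ⟨f, rfl⟩ := σ.surjective x
    show σ.toEmbedding f ∈ _ ↔ σ.toEmbedding f ∈ _
    rw [Finset.mem_compl, Finset.mem_map', Finset.mem_map', Finset.mem_compl]
  unfold kirchhoff
  rw [map_sum]
  refine (Fintype.sum_equiv σ.finsetCongr _ _ ?_).symm
  intro T
  rw [Equiv.finsetCongr_apply]
  show _ = (if M.IsSpanningTree (T.map σ.toEmbedding) then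
      ∏ e ∈ (T.map σ.toEmbedding)ᶜ, (X e : MvPolynomial E ℚ) else 0)
  rw [← hST T, hcompl, Finset.prod_map]
  by_cases hT : M'.IsSpanningTree T <;> simp [hT, map_prod]

end Multigraph
namespace Multigraph

open MvPolynomial

lemma pderiv_rename_of_not_mem {σ τ : Type} (f : σ → τ) (i : τ)
    (hf : ∀ s, f s ≠ i) (p : MvPolynomial σ ℚ) : pderiv i (rename f p) = 0 := by
  induction p using MvPolynomial.induction_on with
  | C a => simp
  | add p q hp hq => simp [hp, hq]
  | mul_X p s hp =>
    rw [map_mul, rename_X, pderiv_mul, hp, pderiv_X_of_ne (hf s)]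
    ring

end Multigraph

open Multigraph MvPolynomial in
theorem cond1_one_vertex_join' {V E V' E' W : Type}
    [Fintype E] [DecidableEq E] [Fintype E'] [DecidableEq E']
    (G : Multigraph V E) (H : Multigraph V' E') (K : Multigraph W (E ⊕ E'))
    (φ : V → W) (φ' : V' → W) (w0 : W)
    (hφ : Function.Injective φ) (hφ' : Function.Injective φ')
    (hc : ∀ e : E, K.fst (Sum.inl e) = φ (G.fst e) ∧ K.snd (Sum.inl e) = φ (G.snd e))
    (hc' : ∀ e' : E', K.fst (Sum.inr e') = φ' (H.fst e') ∧
      K.snd (Sum.inr e') = φ' (H.snd e'))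
    (hcover : Set.range φ ∪ Set.range φ' = Set.univ)
    (hmeet : Set.range φ ∩ Set.range φ' = {w0})
    (hG : G.ConnectedGraph) (hH : H.ConnectedGraph)
    (e : E) (hreg : G.IsRegular e) :
    G.Cond1 e ↔ K.Cond1 (Sum.inl e) := by
  classical
  suffices hmain :
      (G.kirchhoff ∈ Ideal.span (Set.range fun i : E =>
        pderiv i (rename (Subtype.val : {e' : E // e' ≠ e} → E) (G.delete e).kirchhoff))) ↔
      (K.kirchhoff ∈ Ideal.span (Set.range fun s : E ⊕ E' =>
        pderiv s (rename (Subtype.val : {s' : E ⊕ E' // s' ≠ Sum.inl e} → E ⊕ E')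
          (K.delete (Sum.inl e)).kirchhoff))) by
    exact hmain
  -- abbreviations
  set ψ := (G.delete e).kirchhoff with hψdef
  set gR := rename (Subtype.val : {e' : E // e' ≠ e} → E) ψ with hgRdef
  set h := H.kirchhoff with hhdef
  -- product formula for K
  have hK : K.kirchhoff = rename Sum.inl G.kirchhoff * rename Sum.inr h :=
    join_kirchhoff hφ hφ' hc hc' hcover hmeet
  -- relabelling of the deleted graph
  let ε : ({e' : E // e' ≠ e} ⊕ E') ≃ {s : E ⊕ E' // s ≠ Sum.inl e} :=
    { toFun := Sum.elim (fun a => ⟨Sum.inl a.1, by simp [a.2]⟩)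
        (fun b => ⟨Sum.inr b, by simp⟩)
      invFun := fun s => match s with
        | ⟨Sum.inl a, hs⟩ => Sum.inl ⟨a, fun hh => hs (by rw [hh])⟩
        | ⟨Sum.inr b, _⟩ => Sum.inr b
      left_inv := by rintro (⟨a, ha⟩ | b) <;> rfl
      right_inv := by rintro ⟨(a | b), hs⟩ <;> rfl }
  set KD := K.delete (Sum.inl e) with hKDdef
  set K₂ : Multigraph W ({e' : E // e' ≠ e} ⊕ E') :=
    Multigraph.mk (KD.fst ∘ ε) (KD.snd ∘ ε) with hK₂def
  have hKD : KD.kirchhoff = rename ε K₂.kirchhoff := kirchhoff_equiv KD ε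
  have hK₂ : K₂.kirchhoff = rename Sum.inl ψ * rename Sum.inr h :=
    join_kirchhoff (G := G.delete e) (H := H) (K := K₂) hφ hφ'
      (fun a => hc a.1) (fun b => hc' b) hcover hmeet
  have hD : rename (Subtype.val : {s' : E ⊕ E' // s' ≠ Sum.inl e} → E ⊕ E') KD.kirchhoff
      = rename Sum.inl gR * rename Sum.inr h := by
    rw [hKD, hK₂, hgRdef]
    simp only [map_mul, rename_rename]
    rfl
  -- the partial derivatives of the deleted Kirchhoff polynomial of K
  have hvl : ∀ i : E, pderiv (Sum.inl i)
      (rename Sum.inl gR * rename Sum.inr h : MvPolynomial (E ⊕ E') ℚ) =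
      rename Sum.inl (pderiv i gR) * rename Sum.inr h := by
    intro i
    rw [pderiv_mul, pderiv_rename Sum.inl_injective,
      pderiv_rename_of_not_mem Sum.inr (Sum.inl i) (by simp) h, mul_zero, add_zero]
  have hvr : ∀ j : E', pderiv (Sum.inr j)
      (rename Sum.inl gR * rename Sum.inr h : MvPolynomial (E ⊕ E') ℚ) =
      rename Sum.inl gR * rename Sum.inr (pderiv j h) := by
    intro j
    rw [pderiv_mul, pderiv_rename Sum.inr_injective,
      pderiv_rename_of_not_mem Sum.inl (Sum.inr j) (by simp) gR, zero_mul, zero_add]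
  rw [hD, hK]
  constructor
  · intro h1
    obtain ⟨c, hcsum⟩ := Ideal.mem_span_range_iff_exists_fun.mp h1
    have hrepr : rename Sum.inl G.kirchhoff * rename Sum.inr h =
        ∑ i : E, rename Sum.inl (c i) *
          pderiv (Sum.inl i) (rename Sum.inl gR * rename Sum.inr h) := by
      rw [← hcsum, map_sum, Finset.sum_mul]
      refine Finset.sum_congr rfl fun i _ => ?_
      rw [hvl, map_mul, mul_assoc]
    rw [hrepr]
    exact Ideal.sum_mem _ fun i _ =>
      Ideal.mul_mem_left _ _ (Ideal.subset_span ⟨Sum.inl i, rfl⟩)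
  · intro h1
    -- Euler: ψ lies in its own Jacobian ideal
    have heul : ψ ∈ Ideal.span (Set.range fun i' => pderiv i' ψ) :=
      kirchhoff_mem_jacobian _ hreg.2.2
    have hgRmem : gR ∈ Ideal.span (Set.range fun i : E => pderiv i gR) := by
      obtain ⟨cψ, hcψ⟩ := Ideal.mem_span_range_iff_exists_fun.mp heul
      have hstep : gR = ∑ i' : {e' : E // e' ≠ e},
          rename (Subtype.val : {e' : E // e' ≠ e} → E) (cψ i') * pderiv (i' : E) gR := by
        conv_lhs => rw [hgRdef, ← hcψ]
        rw [map_sum]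
        refine Finset.sum_congr rfl fun i' _ => ?_
        rw [map_mul, hgRdef, pderiv_rename Subtype.val_injective]
      have hmem2 : (∑ i' : {e' : E // e' ≠ e},
          rename (Subtype.val : {e' : E // e' ≠ e} → E) (cψ i') * pderiv (i' : E) gR) ∈
          Ideal.span (Set.range fun i : E => pderiv i gR) :=
        Ideal.sum_mem _ fun i' _ =>
          Ideal.mul_mem_left _ _ (Ideal.subset_span ⟨(i' : E), rfl⟩)
      rw [← hstep] at hmem2
      exact hmem2
    set J : Ideal (MvPolynomial (E ⊕ E') ℚ) :=
      Ideal.span (Set.range fun i : E => rename Sum.inl (pderiv i gR)) with hJdef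
    have hinlgR : rename Sum.inl gR ∈ J := by
      obtain ⟨c2, hc2⟩ := Ideal.mem_span_range_iff_exists_fun.mp hgRmem
      rw [← hc2, map_sum]
      refine Ideal.sum_mem _ fun i _ => ?_
      rw [map_mul]
      exact Ideal.mul_mem_left _ _ (Ideal.subset_span ⟨i, rfl⟩)
    have hgen : ∀ s : E ⊕ E',
        pderiv s (rename Sum.inl gR * rename Sum.inr h : MvPolynomial (E ⊕ E') ℚ) ∈ J := by
      intro s
      cases s with
      | inl i =>
        rw [hvl]
        exact Ideal.mul_mem_right _ _ (Ideal.subset_span ⟨i, rfl⟩)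
      | inr j =>
        rw [hvr]
        exact Ideal.mul_mem_right _ _ hinlgR
    have hKJ : rename Sum.inl G.kirchhoff * rename Sum.inr h ∈ J := by
      refine Ideal.span_le.mpr ?_ h1
      rintro x ⟨s, rfl⟩
      exact hgen s
    -- evaluation killing the H-variables
    obtain ⟨T', hT'⟩ := exists_spanningTree H hH
    set ev : MvPolynomial (E ⊕ E') ℚ →ₐ[ℚ] MvPolynomial E ℚ :=
      aeval (Sum.elim X (fun j => if j ∈ T' then 0 else 1)) with hevdef
    have hevl : ∀ p : MvPolynomial E ℚ, ev (rename Sum.inl p) = p := by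
      intro p
      rw [hevdef, aeval_rename, Sum.elim_comp_inl]
      exact aeval_X_left_apply p
    have hevh : ev (rename Sum.inr h) = 1 := by
      rw [hevdef, aeval_rename, Sum.elim_comp_inr, hhdef]
      unfold kirchhoff
      rw [map_sum]
      have hterm : ∀ B : Finset E',
          (aeval (fun j => if j ∈ T' then (0 : MvPolynomial E ℚ) else 1))
            (if H.IsSpanningTree B then ∏ e' ∈ Bᶜ, (X e' : MvPolynomial E' ℚ) else 0) =
          if B = T' then 1 else 0 := by
        intro B
        by_cases hB : B = T'
        · subst hB
          rw [if_pos hT', if_pos rfl, map_prod]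
          refine Finset.prod_eq_one fun j hj => ?_
          rw [aeval_X, if_neg (Finset.mem_compl.mp hj)]
        · rw [if_neg hB]
          by_cases hB2 : H.IsSpanningTree B
          · rw [if_pos hB2, map_prod]
            have hnotsub : ¬ T' ⊆ B := by
              intro hsub
              rcases Finset.exists_of_ssubset (hsub.ssubset_of_ne
                (fun hEq => hB hEq.symm)) with ⟨a, haB, haT'⟩
              refine hB2.2 a haB ?_
              refine (hT'.1).mono' ?_
              intro x hx
              exact Finset.mem_coe.mpr (Finset.mem_erase.mpr
                ⟨fun hxa => haT' (hxa ▸ Finset.mem_coe.mp hx), hsub (Finset.mem_coe.mp hx)⟩)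
            obtain ⟨j, hjT', hjB⟩ := Finset.not_subset.mp hnotsub
            refine Finset.prod_eq_zero (Finset.mem_compl.mpr hjB) ?_
            rw [aeval_X, if_pos hjT']
          · rw [if_neg hB2, map_zero]
      rw [Finset.sum_congr rfl fun B _ => hterm B, Finset.sum_ite_eq' Finset.univ T',
        if_pos (Finset.mem_univ T')]
    obtain ⟨cK, hcK⟩ := Ideal.mem_span_range_iff_exists_fun.mp hKJ
    have happ := congrArg ev hcK
    rw [map_sum, map_mul, hevl, hevh, mul_one] at happ
    have hfinal : G.kirchhoff = ∑ i : E, ev (cK i) * pderiv i gR := by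
      rw [← happ]
      refine Finset.sum_congr rfl fun i _ => ?_
      rw [map_mul, hevl]
    rw [hfinal]
    exact Ideal.sum_mem _ fun i _ =>
      Ideal.mul_mem_left _ _ (Ideal.subset_span ⟨i, rfl⟩)

open Multigraph MvPolynomial in
/-- One-vertex join invariance of Condition 1: if the connected graphs `G` and
`H` are joined at exactly one vertex to form `K`, and `e` is a regular edge of
`G`, then Condition 1 holds for `(G, e)` iff it holds for `(K, e)`. -/
theorem cond1_one_vertex_join {V E V' E' W : Type}
    [Fintype E] [DecidableEq E] [Fintype E'] [DecidableEq E']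
    (G : Multigraph V E) (H : Multigraph V' E') (K : Multigraph W (E ⊕ E'))
    (φ : V → W) (φ' : V' → W) (w0 : W)
    (hφ : Function.Injective φ) (hφ' : Function.Injective φ')
    (hc : ∀ e : E, K.fst (Sum.inl e) = φ (G.fst e) ∧ K.snd (Sum.inl e) = φ (G.snd e))
    (hc' : ∀ e' : E', K.fst (Sum.inr e') = φ' (H.fst e') ∧
      K.snd (Sum.inr e') = φ' (H.snd e'))
    (hcover : Set.range φ ∪ Set.range φ' = Set.univ)
    (hmeet : Set.range φ ∩ Set.range φ' = {w0})
    (hG : G.ConnectedGraph) (hH : H.ConnectedGraph)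
    (e : E) (hreg : G.IsRegular e) :
    G.Cond1 e ↔ K.Cond1 (Sum.inl e) := by
  exact cond1_one_vertex_join' G H K φ φ' w0 hφ hφ' hc hc' hcover hmeet hG hH e hreg
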